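/- arXiv:1711.08258 — 2 statements merged into one kernel-verified Lean document; each statement's English description precedes it below -/
import Mathlib

section
/- Vertical stability of the strict tangent space: let D be a special polyhedra system, J ∈ Sing(D), and D' = Λ_J(D) its characteristic transform. Let J' ∈ H'_∞ be a singular stratum of D', written J' = (K∖J) ∪ A_{J'} ∪ {∞} with K = π_J^#(J') and A_{J'} ⊊ J. Then T(Δ_K) ⊆ A_{J'} ⊊ J, and moreover T(Δ_K) ⊆ T(Δ'_{J'}) ⊆ J'. -/
open scoped Pointwise

namespace RedSing

/-! ### Vectors and polyhedra.
A vector "in `ℝ^J`" is a function `ℕ → ℝ` supported on the finite set `J`. -/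

abbrev Vec : Type := ℕ → ℝ

/-- The cone `ℝ_{≥0}^J` of nonnegative vectors supported on `J`. -/
def suppCone (J : Finset ℕ) : Set Vec :=
  {σ | (∀ j, 0 ≤ σ j) ∧ ∀ j, j ∉ J → σ j = 0}

/-- Positive convex hull `[[A]] = convexHull (A + ℝ_{≥0}^J)`. -/
noncomputable def posHull (J : Finset ℕ) (A : Set Vec) : Set Vec :=
  convexHull ℝ (A + suppCone J)

/-- The lattice points `(1/d)·ℤ_{≥0}^J`. -/
def latticePts (J : Finset ℕ) (d : ℕ) : Set Vec :=
  {σ | σ ∈ suppCone J ∧ ∀ j, ∃ m : ℕ, σ j = (m : ℝ) / (d : ℝ)}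

/-- `Δ ⊆ ℝ_{≥0}^J` is a characteristic polyhedron with denominator `d`. -/
def IsCharPoly (J : Finset ℕ) (d : ℕ) (Δ : Set Vec) : Prop :=
  ∃ A, A ⊆ latticePts J d ∧ Δ = posHull J A

/-! ### Support fabrics -/

/-- A support fabric: a nonempty finite index set `I` together with a
downward-closed family `H` of subsets of `I` (the strata). -/
structure Fabric where
  I : Finset ℕ
  I_nonempty : I.Nonempty
  H : Set (Finset ℕ)
  mem_sub : ∀ J ∈ H, J ⊆ I
  downward : ∀ J ∈ H, ∀ J' ⊆ J, J' ∈ H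

/-- Dimension of a support fabric: the maximal cardinality of a stratum. -/
noncomputable def Fabric.dim (F : Fabric) : ℕ :=
  sSup {n | ∃ J ∈ F.H, J.card = n}

/-- The Zariski topology on finsets: the open sets are the downward-closed families;
subsets such as the strata set `H` carry the subspace topology. -/
instance zariskiTopology : TopologicalSpace (Finset ℕ) where
  IsOpen U := ∀ J ∈ U, ∀ J' ⊆ J, J' ∈ U
  isOpen_univ := fun J _ J' _ => Set.mem_univ J'
  isOpen_inter := fun s t hs ht J hJ J' hJ' => ⟨hs J hJ.1 J' hJ', ht J hJ.2 J' hJ'⟩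
  isOpen_sUnion := fun S hS J hJ J' hJ' => by
    obtain ⟨t, htS, hJt⟩ := hJ
    exact ⟨t, htS, hS t htS J hJt J' hJ'⟩

/-! ### Polyhedra systems -/

/-- A polyhedra system over a support fabric: a nonempty characteristic polyhedron
with denominator `d` for each stratum, compatible with the projections
(restriction of functions). -/
structure PolySys where
  F : Fabric
  d : ℕ
  d_pos : 0 < d
  Δ : Finset ℕ → Set Vec
  char : ∀ J ∈ F.H, IsCharPoly J d (Δ J)
  nonempty : ∀ J ∈ F.H, (Δ J).Nonempty
  compat : ∀ J₁ ∈ F.H, ∀ J₂ ∈ F.H, J₁ ⊆ J₂ →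
    Δ J₁ = (fun σ => fun j => if j ∈ J₁ then σ j else 0) '' Δ J₂

/-- Contact exponent `δ(Δ) = min {|σ| : σ ∈ Δ}` (with the convention `δ = -1`
for the empty index set). -/
noncomputable def contactExp (J : Finset ℕ) (Δ : Set Vec) : ℝ :=
  if J = (∅ : Finset ℕ) then -1 else sInf ((fun σ => ∑ j ∈ J, σ j) '' Δ)

/-- Singular locus: strata with contact exponent at least 1. -/
def Sing (D : PolySys) : Set (Finset ℕ) :=
  {J | J ∈ D.F.H ∧ 1 ≤ contactExp J (D.Δ J)}

/-- `D` is special: `δ(D) = max {δ(Δ_J)} = 1`. -/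
def IsSpecial (D : PolySys) : Prop :=
  (∀ J ∈ D.F.H, contactExp J (D.Δ J) ≤ 1) ∧ ∃ J ∈ D.F.H, contactExp J (D.Δ J) = 1

/-! ### Blow-ups and transforms -/

/-- The strata of the blow-up centered in `J`, with new index `inf` (playing `∞`). -/
def blowupH (H : Set (Finset ℕ)) (J : Finset ℕ) (inf : ℕ) : Set (Finset ℕ) :=
  {K | K ∈ H ∧ ¬ J ⊆ K} ∪
    {J' | ∃ K, (K ∈ H ∧ J ⊆ K) ∧ ∃ A, A ⊂ J ∧ J' = (K \ J) ∪ A ∪ {inf}}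

/-- The map `π_J^#` from the strata of the blow-up to the strata of `F`. -/
def blowdown (J : Finset ℕ) (inf : ℕ) (J' : Finset ℕ) : Finset ℕ :=
  if inf ∈ J' then (J'.erase inf) ∪ J else J'

/-- The map `λ_{J'} : ℝ^K → ℝ^{J'}`. -/
noncomputable def lamMap (J J' : Finset ℕ) (inf : ℕ) (σ : Vec) : Vec :=
  fun j => if j = inf then ∑ i ∈ J, σ i else if j ∈ J' then σ j else 0

/-- The indicator vector `e_{J',∞}` of the new index. -/
def eVec (inf : ℕ) : Vec := fun j => if j = inf then 1 else 0

/-- The polyhedron `Δ⁰_{J'}` of the total transform at a stratum `J'` of the blow-up. -/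
noncomputable def totalΔ (D : PolySys) (J : Finset ℕ) (inf : ℕ) (J' : Finset ℕ) : Set Vec :=
  if inf ∈ J' then posHull J' (lamMap J J' inf '' D.Δ (blowdown J inf J'))
  else D.Δ J'

/-- The polyhedron `Δ'_{J'} = Δ⁰_{J'} - e_{J',∞}` of the characteristic transform
(`e_{J',∞} = 0` when `∞ ∉ J'`). -/
noncomputable def charΔ (D : PolySys) (J : Finset ℕ) (inf : ℕ) (J' : Finset ℕ) : Set Vec :=
  if inf ∈ J' then
    (fun σ => σ - eVec inf) '' posHull J' (lamMap J J' inf '' D.Δ (blowdown J inf J'))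
  else D.Δ J'

/-- `D'` is the total transform `Λ⁰_J(D)` of `D` centered in the nonempty stratum `J`,
with new index `inf`. -/
def IsTotalTransformAt (D D' : PolySys) (J : Finset ℕ) (inf : ℕ) : Prop :=
  J ∈ D.F.H ∧ J ≠ ∅ ∧ D'.d = D.d ∧ inf ∉ D.F.I ∧
  D'.F.I = insert inf D.F.I ∧ D'.F.H = blowupH D.F.H J inf ∧
  ∀ J' ∈ D'.F.H, D'.Δ J' = totalΔ D J inf J'

/-- `D'` is a total transform of `D` centered in `J`. -/
def IsTotalTransform (D D' : PolySys) (J : Finset ℕ) : Prop :=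
  ∃ inf, IsTotalTransformAt D D' J inf

/-- `D'` is the characteristic transform `Λ_J(D)` of `D` centered in the singular
stratum `J`, with new index `inf`. -/
def IsCharTransformAt (D D' : PolySys) (J : Finset ℕ) (inf : ℕ) : Prop :=
  J ∈ Sing D ∧ D'.d = D.d ∧ inf ∉ D.F.I ∧
  D'.F.I = insert inf D.F.I ∧ D'.F.H = blowupH D.F.H J inf ∧
  ∀ J' ∈ D'.F.H, D'.Δ J' = charΔ D J inf J'

/-- `D'` is a characteristic transform of `D` centered in `J`. -/
def IsCharTransform (D D' : PolySys) (J : Finset ℕ) : Prop :=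
  ∃ inf, IsCharTransformAt D D' J inf

/-- A reduction of singularities of `D`: a finite sequence of characteristic
transforms, each centered in a singular stratum of the previous system, ending
in a system with empty singular locus. -/
def HasReduction (D : PolySys) : Prop :=
  ∃ (k : ℕ) (seq : ℕ → PolySys), seq 0 = D ∧
    (∀ i, i < k → ∃ J, IsCharTransform (seq i) (seq (i + 1)) J) ∧
    Sing (seq k) = ∅

/-! ### Strict tangent space and maximal contact -/

/-- Hironaka's strict tangent space `T(Δ)` of a polyhedron `Δ ⊆ ℝ_{≥0}^J`. -/
def strictTangent (J : Finset ℕ) (Δ : Set Vec) : Set ℕ :=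
  {j | ∃ σ ∈ Δ, (∑ i ∈ J, σ i) = 1 ∧ σ j ≠ 0}

/-- The stratum `T` has maximal contact with the (special) system `D`. -/
def HasMaximalContact (D : PolySys) (T : Finset ℕ) : Prop :=
  T ∈ D.F.H ∧ ∀ J ∈ Sing D, (↑T : Set ℕ) ⊆ strictTangent J (D.Δ J)

/-! ### Hironaka's projection from a stratum `T` -/

/-- Hironaka's projection `∇_J^T(σ) = σ|_{J∖T} / (1 - Σ_{j∈T} σ(j))`. -/
noncomputable def hironakaProj (T J : Finset ℕ) (σ : Vec) : Vec :=
  fun j => if j ∈ J \ T then σ j / (1 - ∑ i ∈ T, σ i) else 0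

/-- The polyhedron `Δ^T_{J*} = ∇_J^T(Δ_J ∩ M_J^T)` of Hironaka's projection,
where `J = J* ∪ T`. -/
noncomputable def projΔ (D : PolySys) (T J' : Finset ℕ) : Set Vec :=
  hironakaProj T (J' ∪ T) '' {σ | σ ∈ D.Δ (J' ∪ T) ∧ (∑ i ∈ T, σ i) < 1}

/-- The strata `H^T = {J ∖ T : T ⊆ J ∈ H}` of the projected fabric `F^T`. -/
def projH (F : Fabric) (T : Finset ℕ) : Set (Finset ℕ) :=
  {J' | ∃ J, (J ∈ F.H ∧ T ⊆ J) ∧ J' = J \ T}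

/-- The singular locus of Hironaka's projection `D^T`. -/
def projSing (D : PolySys) (T : Finset ℕ) : Set (Finset ℕ) :=
  {J' | J' ∈ projH D.F T ∧ (projΔ D T J').Nonempty ∧ 1 ≤ contactExp J' (projΔ D T J')}

/-- `E` is Hironaka's projection `D^T` of `D` from the stratum `T`
(a polyhedra system over `F^T` with denominator `d!·d`). -/
def IsHironakaProjection (D E : PolySys) (T : Finset ℕ) : Prop :=
  E.F.I = D.F.I \ T ∧ E.F.H = projH D.F T ∧ E.d = Nat.factorial D.d * D.d ∧
  ∀ J' ∈ E.F.H, E.Δ J' = projΔ D T J'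

/-! ### Reduction `Red_C` of a system to a closed set `C` of strata -/

/-- The fabric `Red_C(F)`, with strata `H_C = ⋃_{J ∈ C} P(J)`. -/
def Fabric.red (F : Fabric) (C : Set (Finset ℕ)) : Fabric where
  I := F.I
  I_nonempty := F.I_nonempty
  H := {J' | ∃ J, (J ∈ C ∧ J ∈ F.H) ∧ J' ⊆ J}
  mem_sub := by
    rintro J' ⟨J, ⟨_, hJH⟩, hsub⟩
    exact hsub.trans (F.mem_sub J hJH)
  downward := by
    rintro J' ⟨J, hJ, hsub⟩ J'' hsub'
    exact ⟨J, hJ, hsub'.trans hsub⟩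

/-- The reduction `Red_C(D)` of a polyhedra system to a closed set `C ⊆ H`. -/
noncomputable def PolySys.red (D : PolySys) (C : Set (Finset ℕ)) : PolySys where
  F := D.F.red C
  d := D.d
  d_pos := D.d_pos
  Δ := D.Δ
  char := by
    rintro J ⟨K, ⟨_, hK⟩, hsub⟩
    exact D.char J (D.F.downward K hK J hsub)
  nonempty := by
    rintro J ⟨K, ⟨_, hK⟩, hsub⟩
    exact D.nonempty J (D.F.downward K hK J hsub)
  compat := by
    rintro J₁ ⟨K₁, ⟨_, hK₁⟩, h₁⟩ J₂ ⟨K₂, ⟨_, hK₂⟩, h₂⟩ h12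
    exact D.compat J₁ (D.F.downward K₁ hK₁ J₁ h₁) J₂ (D.F.downward K₂ hK₂ J₂ h₂) h12

/-- A special polyhedra system is consistent if for each connected component `C`
of its singular locus there is a stratum having maximal contact with `Red_C(D)`
(non-singular systems are consistent by convention). -/
def IsConsistent (D : PolySys) : Prop :=
  ∀ x ∈ Sing D, ∃ T, HasMaximalContact (D.red (connectedComponentIn (Sing D) x)) T

/-! ### Fitting and Spivakovsky's invariant -/

/-- The fitting vector `w_Δ(j) = min {σ(j) : σ ∈ Δ}`. -/
noncomputable def fitVec (Δ : Set Vec) : Vec := fun j => sInf ((fun σ => σ j) '' Δ)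

/-- The fitting `Δ̃ = Δ - w_Δ`. -/
noncomputable def fitting (Δ : Set Vec) : Set Vec := (fun σ => σ - fitVec Δ) '' Δ

/-- Spivakovsky's invariant `Spi_D = max {δ(Δ̃_J) : J ∈ Sing(D)}`. -/
noncomputable def spi (D : PolySys) : ℝ :=
  sSup {x | ∃ J ∈ Sing D, contactExp J (fitting (D.Δ J)) = x}

/-- `S(D) = {J ∈ Sing(D) : δ(Δ̃_J) = Spi_D}`. -/
def SSet (D : PolySys) : Set (Finset ℕ) :=
  {J | J ∈ Sing D ∧ contactExp J (fitting (D.Δ J)) = spi D}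

/-! ### Moderated transforms, normal crossings, quasi-ordinary systems -/

/-- The polyhedron of the `d`-moderated transform `Θ^d_J(N) = N(Λ_J(N/d))`
at a stratum `J'` of the blow-up. -/
noncomputable def modΔ (N : PolySys) (d : ℕ) (J : Finset ℕ) (inf : ℕ) (J' : Finset ℕ) :
    Set Vec :=
  if inf ∈ J' then
    (fun σ => σ - (d : ℝ) • eVec inf) ''
      posHull J' (lamMap J J' inf '' N.Δ (blowdown J inf J'))
  else N.Δ J'

/-- `N'` is the `d`-moderated transform `Θ^d_J(N)` of the Newton polyhedra system `N`
centered in a stratum `J` with `δ(N_J) ≥ d`, with new index `inf`. -/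
def IsModTransformAt (N N' : PolySys) (d : ℕ) (J : Finset ℕ) (inf : ℕ) : Prop :=
  N.d = 1 ∧ N'.d = 1 ∧ J ∈ N.F.H ∧ (d : ℝ) ≤ contactExp J (N.Δ J) ∧ inf ∉ N.F.I ∧
  N'.F.I = insert inf N.F.I ∧ N'.F.H = blowupH N.F.H J inf ∧
  ∀ J' ∈ N'.F.H, N'.Δ J' = modΔ N d J inf J'

/-- `N'` is a `d`-moderated transform of `N` centered in `J`. -/
def IsModTransform (N N' : PolySys) (d : ℕ) (J : Finset ℕ) : Prop :=
  ∃ inf, IsModTransformAt N N' d J inf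

/-- A Newton polyhedra system has normal crossings if each polyhedron has a
single vertex. -/
def HasNormalCrossings (D : PolySys) : Prop :=
  ∀ J ∈ D.F.H, ∃ σ, D.Δ J = posHull J {σ}

/-- `D` is Hironaka quasi-ordinary: each polyhedron over a singular stratum has a
single vertex. -/
def IsQuasiOrdinary (D : PolySys) : Prop :=
  ∀ J ∈ Sing D, ∃ σ, D.Δ J = posHull J {σ}

/-! ### Lexicographic order on sequences of naturals -/

/-- Strict lexicographic order on sequences `ℕ → ℕ`. -/
def LexLt (φ ψ : ℕ → ℕ) : Prop := ∃ n, φ n < ψ n ∧ ∀ m < n, φ m = ψ m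

/-- A weakly decreasing sequence of naturals. -/
def WeaklyDecr (φ : ℕ → ℕ) : Prop := ∀ n, φ (n + 1) ≤ φ n

/-! Auxiliary lemmas for vertical stability. -/

lemma zero_mem_suppCone (J : Finset ℕ) : (0 : Vec) ∈ suppCone J :=
  ⟨fun _ => le_rfl, fun _ _ => rfl⟩

lemma suppCone_convex (J : Finset ℕ) : Convex ℝ (suppCone J) := by
  intro x hx y hy a b ha hb _
  refine ⟨fun j => ?_, fun j hj => ?_⟩
  · simpa using add_nonneg (mul_nonneg ha (hx.1 j)) (mul_nonneg hb (hy.1 j))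
  · simp [hx.2 j hj, hy.2 j hj]

lemma posHull_subset_suppCone (J : Finset ℕ) (A : Set Vec) (h : A ⊆ suppCone J) :
    posHull J A ⊆ suppCone J := by
  refine convexHull_min ?_ (suppCone_convex J)
  rintro _ ⟨x, hx, y, hy, rfl⟩
  exact ⟨fun j => add_nonneg ((h hx).1 j) (hy.1 j),
    fun j hj => by simp [(h hx).2 j hj, hy.2 j hj]⟩

lemma subset_posHull (J : Finset ℕ) (A : Set Vec) : A ⊆ posHull J A := fun x hx =>
  subset_convexHull ℝ _ ⟨x, hx, 0, zero_mem_suppCone J, add_zero x⟩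

lemma Δ_subset_suppCone (D : PolySys) (J : Finset ℕ) (hJ : J ∈ D.F.H) :
    D.Δ J ⊆ suppCone J := by
  obtain ⟨A, hA, hΔ⟩ := D.char J hJ
  rw [hΔ]
  exact posHull_subset_suppCone J A fun σ hσ => (hA hσ).1

/-- Vertical stability of the strict tangent space: for a singular stratum
`J' = (K∖J) ∪ A_{J'} ∪ {∞}` (so `A_{J'} = J' ∩ J`) of the characteristic transform
of a special system, `T(Δ_K) ⊆ A_{J'} ⊊ J` and `T(Δ_K) ⊆ T(Δ'_{J'}) ⊆ J'`. -/
theorem vertical_stability (D D' : PolySys) (hsp : IsSpecial D) (J : Finset ℕ)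
    (inf : ℕ) (h : IsCharTransformAt D D' J inf) (J' : Finset ℕ)
    (hJ' : J' ∈ D'.F.H) (hinf : inf ∈ J') (hsing : J' ∈ Sing D') :
    strictTangent (blowdown J inf J') (D.Δ (blowdown J inf J')) ⊆ (↑(J' ∩ J) : Set ℕ) ∧
      J' ∩ J ⊂ J ∧
      strictTangent (blowdown J inf J') (D.Δ (blowdown J inf J')) ⊆
        strictTangent J' (D'.Δ J') ∧
      strictTangent J' (D'.Δ J') ⊆ (↑J' : Set ℕ) := by
  obtain ⟨hJsing, hd, hinfI, hI, hH, hΔ'⟩ := h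
  have hJH : J ∈ D.F.H := hJsing.1
  have hinfJ : inf ∉ J := fun hc => hinfI (D.F.mem_sub J hJH hc)
  -- Determine the structure of J'
  have hJ'2 := hJ'
  rw [hH] at hJ'2
  rcases hJ'2 with ⟨hKH, -⟩ | ⟨K₀, ⟨hK₀H, hJK₀⟩, A, hAJ, hJ'eq⟩
  · exact absurd (D.F.mem_sub _ hKH hinf) hinfI
  have hinfK₀ : inf ∉ K₀ := fun hc => hinfI (D.F.mem_sub _ hK₀H hc)
  have hAJsub : A ⊆ J := hAJ.subset
  have hinfA : inf ∉ A := fun hc => hinfJ (hAJsub hc)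
  subst hJ'eq
  set J' : Finset ℕ := (K₀ \ J) ∪ A ∪ {inf} with hJ'def
  -- blowdown computes K₀, and J' ∩ J = A
  have herase : J'.erase inf = (K₀ \ J) ∪ A := by
    ext j
    simp only [hJ'def, Finset.mem_erase, Finset.mem_union, Finset.mem_sdiff,
      Finset.mem_singleton]
    constructor
    · rintro ⟨hne, (h1 | h1) | h1⟩
      · exact Or.inl h1
      · exact Or.inr h1
      · exact absurd h1 hne
    · rintro (h1 | h1)
      · exact ⟨fun he => hinfK₀ (he ▸ h1.1), Or.inl (Or.inl h1)⟩
      · exact ⟨fun he => hinfA (he ▸ h1), Or.inl (Or.inr h1)⟩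
  have hK : blowdown J inf J' = K₀ := by
    unfold blowdown
    rw [if_pos hinf, herase]
    ext j
    simp only [Finset.mem_union, Finset.mem_sdiff]
    constructor
    · rintro ((h1 | h1) | h1)
      exacts [h1.1, hJK₀ (hAJsub h1), hJK₀ h1]
    · intro hj
      by_cases hjJ : j ∈ J
      · exact Or.inr hjJ
      · exact Or.inl (Or.inl ⟨hj, hjJ⟩)
  have hAint : J' ∩ J = A := by
    ext j
    simp only [hJ'def, Finset.mem_inter, Finset.mem_union, Finset.mem_sdiff,
      Finset.mem_singleton]
    constructor
    · rintro ⟨(h1 | h1) | h1, hjJ⟩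
      · exact absurd hjJ h1.2
      · exact h1
      · exact absurd hjJ (h1 ▸ hinfJ)
    · intro hjA
      exact ⟨Or.inl (Or.inr hjA), hAJsub hjA⟩
  rw [hK, hAint]
  -- Basic containments
  have hΔK : D.Δ K₀ ⊆ suppCone K₀ := Δ_subset_suppCone D K₀ hK₀H
  have hΔJ'val : D'.Δ J' =
      (fun σ => σ - eVec inf) '' posHull J' (lamMap J J' inf '' D.Δ K₀) := by
    rw [hΔ' J' hJ', charΔ, if_pos hinf, hK]
  have hlam : lamMap J J' inf '' D.Δ K₀ ⊆ suppCone J' := by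
    rintro _ ⟨σ, hσ, rfl⟩
    have hs := hΔK hσ
    refine ⟨fun j => ?_, fun j hj => ?_⟩
    · unfold lamMap
      split_ifs
      · exact Finset.sum_nonneg fun i _ => hs.1 i
      · exact hs.1 j
      · exact le_rfl
    · unfold lamMap
      have hne : j ≠ inf := fun he => hj (by rw [he]; exact hinf)
      rw [if_neg hne, if_neg hj]
  have hpos : posHull J' (lamMap J J' inf '' D.Δ K₀) ⊆ suppCone J' :=
    posHull_subset_suppCone _ _ hlam
  have heinf : ∑ j ∈ J', eVec inf j = 1 := by
    simp only [eVec]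
    rw [Finset.sum_ite_eq' J' inf (fun _ => (1 : ℝ)), if_pos hinf]
  -- the sum over J' of any element of D'.Δ J'
  have hsubsum : ∀ ρ : Vec, ∑ j ∈ J', (ρ - eVec inf) j = (∑ j ∈ J', ρ j) - 1 := by
    intro ρ
    simp only [Pi.sub_apply, Finset.sum_sub_distrib, heinf]
  -- from singularity: every element of the hull has sum ≥ 2
  have hJ'ne : J' ≠ (∅ : Finset ℕ) := Finset.ne_empty_of_mem hinf
  have hsing2 : (1 : ℝ) ≤ sInf ((fun σ => ∑ j ∈ J', σ j) '' D'.Δ J') := by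
    have := hsing.2
    rwa [contactExp, if_neg hJ'ne] at this
  have hbdd : BddBelow ((fun σ => ∑ j ∈ J', σ j) '' D'.Δ J') := by
    refine ⟨-1, ?_⟩
    rintro x ⟨τ, hτ, rfl⟩
    rw [hΔJ'val] at hτ
    obtain ⟨ρ, hρ, rfl⟩ := hτ
    have h0 : 0 ≤ ∑ j ∈ J', ρ j := Finset.sum_nonneg fun j _ => (hpos hρ).1 j
    show -1 ≤ ∑ j ∈ J', (ρ - eVec inf) j
    rw [hsubsum ρ]
    linarith
  have h1 : ∀ τ ∈ D'.Δ J', (1 : ℝ) ≤ ∑ j ∈ J', τ j := fun τ hτ =>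
    le_trans hsing2 (csInf_le hbdd ⟨τ, hτ, rfl⟩)
  have h2 : ∀ ρ ∈ posHull J' (lamMap J J' inf '' D.Δ K₀), (2 : ℝ) ≤ ∑ j ∈ J', ρ j := by
    intro ρ hρ
    have := h1 (ρ - eVec inf) (by rw [hΔJ'val]; exact ⟨ρ, hρ, rfl⟩)
    rw [hsubsum ρ] at this
    linarith
  -- sum decomposition of lamMap
  have hdisj : Disjoint (K₀ \ J) A := by
    rw [Finset.disjoint_left]
    intro j hj hjA
    exact (Finset.mem_sdiff.mp hj).2 (hAJsub hjA)
  have hsumlam : ∀ σ : Vec, ∑ j ∈ J', lamMap J J' inf σ j =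
      (∑ i ∈ J, σ i) + ((∑ j ∈ K₀ \ J, σ j) + ∑ j ∈ A, σ j) := by
    intro σ
    rw [← Finset.add_sum_erase J' (lamMap J J' inf σ) hinf]
    congr 1
    · unfold lamMap; rw [if_pos rfl]
    · have hcongr : ∑ j ∈ J'.erase inf, lamMap J J' inf σ j = ∑ j ∈ J'.erase inf, σ j := by
        refine Finset.sum_congr rfl fun j hj => ?_
        obtain ⟨hjne, hj'⟩ := Finset.mem_erase.mp hj
        unfold lamMap
        rw [if_neg hjne, if_pos hj']
      rw [hcongr, herase, Finset.sum_union hdisj]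
  -- the key lemma
  have hkey : ∀ σ ∈ D.Δ K₀, (∑ i ∈ K₀, σ i) = 1 →
      (∀ j, σ j ≠ 0 → j ∈ A) ∧ ∑ j ∈ J', lamMap J J' inf σ j = 2 := by
    intro σ hσ hσ1
    have hs := hΔK hσ
    have hlm := h2 _ (subset_posHull _ _ ⟨σ, hσ, rfl⟩)
    rw [hsumlam σ] at hlm
    have hab : (∑ j ∈ K₀ \ J, σ j) + ∑ i ∈ J, σ i = 1 := by
      rw [Finset.sum_sdiff hJK₀]; exact hσ1
    have hca : (∑ j ∈ A, σ j) ≤ ∑ i ∈ J, σ i :=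
      Finset.sum_le_sum_of_subset_of_nonneg hAJsub fun i _ _ => hs.1 i
    have hbnn : (0 : ℝ) ≤ ∑ j ∈ K₀ \ J, σ j := Finset.sum_nonneg fun j _ => hs.1 j
    have hb0 : (∑ j ∈ K₀ \ J, σ j) = 0 := by linarith
    have ha1 : (∑ i ∈ J, σ i) = 1 := by linarith
    have hc1 : (∑ j ∈ A, σ j) = 1 := by linarith
    have hJA : (∑ j ∈ J \ A, σ j) = 0 := by
      have := Finset.sum_sdiff hAJsub (f := σ)
      linarith
    have hzero1 : ∀ j ∈ K₀ \ J, σ j = 0 := by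
      intro j hj
      exact (Finset.sum_eq_zero_iff_of_nonneg fun i _ => hs.1 i).mp hb0 j hj
    have hzero2 : ∀ j ∈ J \ A, σ j = 0 := by
      intro j hj
      exact (Finset.sum_eq_zero_iff_of_nonneg fun i _ => hs.1 i).mp hJA j hj
    refine ⟨fun j hj => ?_, by rw [hsumlam σ]; linarith⟩
    have hjK₀ : j ∈ K₀ := by
      by_contra hc
      exact hj (hs.2 j hc)
    by_cases hjJ : j ∈ J
    · by_contra hjA
      exact hj (hzero2 j (Finset.mem_sdiff.mpr ⟨hjJ, hjA⟩))
    · exact absurd (hzero1 j (Finset.mem_sdiff.mpr ⟨hjK₀, hjJ⟩)) hj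
  -- assemble the four statements
  refine ⟨?_, hAint ▸ hAJ, ?_, ?_⟩
  · rintro j ⟨σ, hσ, hσ1, hσj⟩
    exact (hkey σ hσ hσ1).1 j hσj
  · rintro j ⟨σ, hσ, hσ1, hσj⟩
    obtain ⟨hsupp, hsum2⟩ := hkey σ hσ hσ1
    have hjA : j ∈ A := hsupp j hσj
    have hjJ' : j ∈ J' := by
      rw [hJ'def]; exact Finset.mem_union_left _ (Finset.mem_union_right _ hjA)
    have hjne : j ≠ inf := fun he => hinfA (he ▸ hjA)
    refine ⟨lamMap J J' inf σ - eVec inf, ?_, ?_, ?_⟩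
    · rw [hΔJ'val]
      exact ⟨_, subset_posHull _ _ ⟨σ, hσ, rfl⟩, rfl⟩
    · rw [hsubsum, hsum2]; norm_num
    · have : (lamMap J J' inf σ - eVec inf) j = σ j := by
        simp only [Pi.sub_apply, lamMap, eVec, if_neg hjne, if_pos hjJ']
        ring
      rw [this]; exact hσj
  · rintro j ⟨τ, hτ, -, hτj⟩
    rw [hΔJ'val] at hτ
    obtain ⟨ρ, hρ, rfl⟩ := hτ
    by_contra hjJ'
    have hjJ'' : j ∉ J' := fun hc => hjJ' (Finset.mem_coe.mpr hc)
    have hρ0 : ρ j = 0 := (hpos hρ).2 j hjJ''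
    have hjne : j ≠ inf := fun he => hjJ'' (he ▸ hinf)
    exact hτj (by simp [Pi.sub_apply, hρ0, eVec, hjne])

end RedSing
end

section
/- Stability of maximal contact under blow-up: let D be a special polyhedra system, T a stratum having maximal contact with D, and J ∈ Sing(D) with T ≠ J. Then T is a stratum of π_J(F) (indeed T ∈ H'_s), and T has maximal contact with Λ_J(D), i.e., T ⊆ T(Δ'_{J'}) for every singular stratum J' of Λ_J(D). -/
open scoped Pointwise

namespace RedSing

/-- A characteristic polyhedron with index set `J` lies in `ℝ_{≥0}^J`. -/
lemma charPoly_subset {J : Finset ℕ} {d : ℕ} {Δ : Set Vec} (h : IsCharPoly J d Δ) :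
    Δ ⊆ suppCone J := by
  obtain ⟨A, hA, rfl⟩ := h
  rw [posHull]
  refine convexHull_min ?_ (suppCone_convex J)
  rintro σ ⟨a, ha, c, hc, rfl⟩
  have haS := (hA ha).1
  exact ⟨fun j => add_nonneg (haS.1 j) (hc.1 j),
    fun j hj => by simp [Pi.add_apply, haS.2 j hj, hc.2 j hj]⟩

/-- If the contact exponent of `Δ` is at least `1`, then every element of `Δ`
has total sum at least `1`. -/
lemma one_le_sum_of_mem {J : Finset ℕ} {Δ : Set Vec} (hJ : J ≠ ∅)
    (h1 : 1 ≤ contactExp J Δ) {σ : Vec} (hσ : σ ∈ Δ) : 1 ≤ ∑ j ∈ J, σ j := by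
  rw [contactExp, if_neg hJ] at h1
  by_cases hb : BddBelow ((fun σ => ∑ j ∈ J, σ j) '' Δ)
  · exact h1.trans (csInf_le hb ⟨σ, hσ, rfl⟩)
  · rw [Real.sInf_of_not_bddBelow hb] at h1; linarith

/-- Stability of maximal contact under blow-up: if `T` has maximal contact with
the special system `D` and `J ∈ Sing(D)` with `T ≠ J`, then `T` is a stratum of
the blow-up (indeed `T ∈ H'_s`) and `T` has maximal contact with `Λ_J(D)`. -/
theorem maximal_contact_stable (D D' : PolySys) (hsp : IsSpecial D) (T : Finset ℕ)
    (hT : HasMaximalContact D T) (J : Finset ℕ) (hJ : J ∈ Sing D) (hTJ : T ≠ J)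
    (inf : ℕ) (h : IsCharTransformAt D D' J inf) :
    (T ∈ D.F.H ∧ ¬ J ⊆ T) ∧ T ∈ D'.F.H ∧ HasMaximalContact D' T := by
  obtain ⟨hJSing, hd, hinfI, hI', hH', hΔ'⟩ := h
  have hJH : J ∈ D.F.H := hJ.1
  have hδJ : 1 ≤ contactExp J (D.Δ J) := hJ.2
  have hJne : J ≠ ∅ := by
    rintro rfl
    rw [contactExp, if_pos rfl] at hδJ; linarith
  have hTH : T ∈ D.F.H := hT.1
  -- `T ⊆ J` since `T ⊆ T(Δ_J) ⊆ J`.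
  have hTsubJ : T ⊆ J := by
    intro j hj
    obtain ⟨σ, hσ, -, hne⟩ := hT.2 J hJ (Finset.mem_coe.mpr hj)
    by_contra hj'
    exact hne ((charPoly_subset (D.char J hJH) hσ).2 j hj')
  have hnJT : ¬ J ⊆ T := fun hJT => hTJ (Finset.Subset.antisymm hTsubJ hJT)
  have hT' : T ∈ D'.F.H := by
    rw [hH']; exact Or.inl ⟨hTH, hnJT⟩
  refine ⟨⟨hTH, hnJT⟩, hT', hT', ?_⟩
  intro J' hJ'Sing
  have hJ'H : J' ∈ D'.F.H := hJ'Sing.1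
  have hδ' : 1 ≤ contactExp J' (D'.Δ J') := hJ'Sing.2
  have hEq := hΔ' J' hJ'H
  rw [hH'] at hJ'H
  rcases hJ'H with ⟨hJ'H, hnsub⟩ | ⟨K, ⟨hKH, hJK⟩, A, hAJ, hJ'eq⟩
  · -- old stratum: the polyhedron is unchanged
    have hinfJ' : inf ∉ J' := fun hmem => hinfI (D.F.mem_sub J' hJ'H hmem)
    rw [charΔ, if_neg hinfJ'] at hEq
    rw [hEq] at hδ' ⊢
    exact hT.2 J' ⟨hJ'H, hδ'⟩
  · -- new stratum containing the exceptional index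
    subst hJ'eq
    have hKI : K ⊆ D.F.I := D.F.mem_sub K hKH
    have hAK : A ⊆ K := hAJ.subset.trans hJK
    have hinfK : inf ∉ K := fun hm => hinfI (hKI hm)
    have hinfJ' : inf ∈ (K \ J) ∪ A ∪ {inf} := by simp
    have hJ'ne : (K \ J) ∪ A ∪ {inf} ≠ ∅ := Finset.ne_empty_of_mem hinfJ'
    have hinfKA : inf ∉ (K \ J) ∪ A := by
      intro hm
      rcases Finset.mem_union.mp hm with hm | hm
      · exact hinfK (Finset.mem_sdiff.mp hm).1
      · exact hinfK (hAK hm)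
    have herase : ((K \ J) ∪ A ∪ {inf}).erase inf = (K \ J) ∪ A := by
      ext i
      simp only [Finset.mem_erase, Finset.mem_union, Finset.mem_sdiff, Finset.mem_singleton]
      constructor
      · rintro ⟨hne, (hh | hh) | hh⟩
        · exact Or.inl hh
        · exact Or.inr hh
        · exact absurd hh hne
      · rintro (hh | hh)
        · exact ⟨fun e => hinfK (e ▸ hh.1), Or.inl (Or.inl hh)⟩
        · exact ⟨fun e => hinfK (e ▸ hAK hh), Or.inl (Or.inr hh)⟩
    have hbd : blowdown J inf ((K \ J) ∪ A ∪ {inf}) = K := by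
      rw [blowdown, if_pos hinfJ', herase]
      ext i
      simp only [Finset.mem_union, Finset.mem_sdiff]
      constructor
      · rintro ((hh | hh) | hh)
        · exact hh.1
        · exact hAK hh
        · exact hJK hh
      · intro hiK
        by_cases hiJ : i ∈ J
        · exact Or.inr hiJ
        · exact Or.inl (Or.inl ⟨hiK, hiJ⟩)
    have hKsupp : ∀ σ ∈ D.Δ K, σ ∈ suppCone K :=
      fun σ hσ => charPoly_subset (D.char K hKH) hσ
    -- every element of `Δ_K` has sum over `J` at least `1`
    have hsumJ_ge : ∀ σ ∈ D.Δ K, 1 ≤ ∑ i ∈ J, σ i := by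
      intro σ hσ
      have hmem : (fun j => if j ∈ J then σ j else 0) ∈ D.Δ J := by
        rw [D.compat J hJH K hKH hJK]; exact ⟨σ, hσ, rfl⟩
      have h1 := one_le_sum_of_mem hJne hδJ hmem
      have heq : ∑ j ∈ J, (if j ∈ J then σ j else 0) = ∑ j ∈ J, σ j :=
        Finset.sum_congr rfl fun j hj => if_pos hj
      linarith
    have hKne : K ≠ ∅ := by
      obtain ⟨x, hx⟩ := Finset.nonempty_iff_ne_empty.mpr hJne
      exact Finset.ne_empty_of_mem (hJK hx)
    have hKSing : K ∈ Sing D := by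
      refine ⟨hKH, ?_⟩
      rw [contactExp, if_neg hKne]
      refine le_csInf ((D.nonempty K hKH).image _) ?_
      rintro b ⟨σ, hσ, rfl⟩
      have h1 := hsumJ_ge σ hσ
      have h2 : ∑ i ∈ J, σ i ≤ ∑ i ∈ K, σ i :=
        Finset.sum_le_sum_of_subset_of_nonneg hJK fun i _ _ => (hKsupp σ hσ).1 i
      linarith
    intro j hjT
    have hjJ : j ∈ J := hTsubJ (Finset.mem_coe.mp hjT)
    obtain ⟨σ, hσK, hsumK, hσj⟩ := hT.2 K hKSing hjT
    have hσsupp := hKsupp σ hσK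
    have hJle : ∑ i ∈ J, σ i ≤ 1 := by
      have := Finset.sum_le_sum_of_subset_of_nonneg hJK fun i _ _ => hσsupp.1 i
      linarith [this, hsumK.le]
    have hJeq : ∑ i ∈ J, σ i = 1 := le_antisymm hJle (hsumJ_ge σ hσK)
    -- `σ` vanishes on `K \ J`
    have hKJsum : ∑ i ∈ K \ J, σ i = 0 := by
      have hsplit : ∑ i ∈ K \ J, σ i + ∑ i ∈ J, σ i = ∑ i ∈ K, σ i := Finset.sum_sdiff hJK
      rw [hJeq, hsumK] at hsplit; linarith
    have hKJ0 : ∀ i ∈ K \ J, σ i = 0 :=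
      fun i hi => (Finset.sum_eq_zero_iff_of_nonneg fun i _ => hσsupp.1 i).mp hKJsum i hi
    -- the transformed vector
    set ν := lamMap J ((K \ J) ∪ A ∪ {inf}) inf σ with hνdef
    have hνmem : ν ∈ posHull ((K \ J) ∪ A ∪ {inf})
        (lamMap J ((K \ J) ∪ A ∪ {inf}) inf ''
          D.Δ (blowdown J inf ((K \ J) ∪ A ∪ {inf}))) := by
      apply subset_convexHull
      exact ⟨ν, ⟨σ, by rw [hbd]; exact hσK, rfl⟩, 0,
        ⟨fun j => le_refl 0, fun j _ => rfl⟩, add_zero ν⟩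
    have hτmem : ν - eVec inf ∈ D'.Δ ((K \ J) ∪ A ∪ {inf}) := by
      rw [hEq, charΔ, if_pos hinfJ']
      exact ⟨ν, hνmem, rfl⟩
    -- compute the sum of `ν` over the new stratum
    have hνinf : ν inf = 1 := by
      rw [hνdef]; simp [lamMap, hJeq]
    have hν_old : ∀ i ∈ (K \ J) ∪ A, ν i = σ i := by
      intro i hi
      have hiK : i ∈ K := by
        rcases Finset.mem_union.mp hi with hh | hh
        · exact (Finset.mem_sdiff.mp hh).1
        · exact hAK hh
      have hine : i ≠ inf := fun e => hinfK (e ▸ hiK)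
      rw [hνdef]
      simp only [lamMap, if_neg hine,
        if_pos (Finset.mem_union_left _ hi)]
    have hdisjKA : Disjoint (K \ J) A := by
      rw [Finset.disjoint_left]
      intro i hi hiA
      exact (Finset.mem_sdiff.mp hi).2 (hAJ.subset hiA)
    have hdisj_inf : Disjoint ((K \ J) ∪ A) ({inf} : Finset ℕ) :=
      Finset.disjoint_singleton_right.mpr hinfKA
    have hsum_old : ∑ i ∈ (K \ J) ∪ A, ν i = ∑ i ∈ A, σ i := by
      rw [Finset.sum_congr rfl hν_old, Finset.sum_union hdisjKA, hKJsum, zero_add]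
    have hνsum : ∑ i ∈ (K \ J) ∪ A ∪ {inf}, ν i = ∑ i ∈ A, σ i + 1 := by
      rw [Finset.sum_union hdisj_inf, hsum_old, Finset.sum_singleton, hνinf]
    have hesum : ∑ i ∈ (K \ J) ∪ A ∪ {inf}, eVec inf i = 1 := by
      rw [Finset.sum_union hdisj_inf, Finset.sum_singleton]
      have h0 : ∑ i ∈ (K \ J) ∪ A, eVec inf i = 0 :=
        Finset.sum_eq_zero fun i hi => by
          have hine : i ≠ inf := fun e => hinfKA (e ▸ hi)
          simp [eVec, hine]
      rw [h0, zero_add]; simp [eVec]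
    have hτsum : ∑ i ∈ (K \ J) ∪ A ∪ {inf}, (ν - eVec inf) i = ∑ i ∈ A, σ i := by
      simp only [Pi.sub_apply, Finset.sum_sub_distrib, hνsum, hesum]
      ring
    -- the singularity of the new stratum forces `σ` to concentrate on `A`
    have hA_ge : 1 ≤ ∑ i ∈ A, σ i := by
      have := one_le_sum_of_mem hJ'ne hδ' hτmem
      rw [hτsum] at this; exact this
    have hA_le : ∑ i ∈ A, σ i ≤ ∑ i ∈ J, σ i :=
      Finset.sum_le_sum_of_subset_of_nonneg hAJ.subset fun i _ _ => hσsupp.1 i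
    have hAeq : ∑ i ∈ A, σ i = 1 := le_antisymm (hJeq ▸ hA_le) hA_ge
    -- `σ` vanishes on `J \ A`, so `j ∈ A`
    have hJAsum : ∑ i ∈ J \ A, σ i = 0 := by
      have hsplit : ∑ i ∈ J \ A, σ i + ∑ i ∈ A, σ i = ∑ i ∈ J, σ i :=
        Finset.sum_sdiff hAJ.subset
      rw [hAeq, hJeq] at hsplit; linarith
    have hjA : j ∈ A := by
      by_contra hjA
      exact hσj ((Finset.sum_eq_zero_iff_of_nonneg fun i _ => hσsupp.1 i).mp hJAsum j
        (Finset.mem_sdiff.mpr ⟨hjJ, hjA⟩))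
    have hjne : j ≠ inf := fun e => hinfK (e ▸ hJK hjJ)
    have hτj : (ν - eVec inf) j ≠ 0 := by
      have hjKA : j ∈ (K \ J) ∪ A := Finset.mem_union_right _ hjA
      have : ν j = σ j := hν_old j hjKA
      simp only [Pi.sub_apply, this, eVec, if_neg hjne, sub_zero]
      exact hσj
    exact ⟨ν - eVec inf, hτmem, by rw [hτsum]; exact hAeq, hτj⟩

end RedSing
end
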